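/- Let F be a field of characteristic zero, let j : V' → V be an injective linear map of F-vector spaces, and let k be a natural number. Let δ' : ⋀^{k+1} V' → (⋀^k V') ⊗ V' and δ : ⋀^{k+1} V → (⋀^k V) ⊗ V be the Koszul differentials, and let j₂ = (⋀^k j) ⊗ j : (⋀^k V') ⊗ V' → (⋀^k V) ⊗ V. Then the preimage under j₂ of the range of δ equals the range of δ'. In particular, if α' ∈ (⋀^k V') ⊗ V' satisfies j₂(α') = δ(β) for some β ∈ ⋀^{k+1} V, then there exists β' ∈ ⋀^{k+1} V' with δ'(β') = α'. -/

import Mathlib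

open TensorProduct

/-- The `n`-th exterior power `⋀^n V` of an `F`-vector space `V` (the degree-`n` part
of the exterior algebra of `V`). -/
def ExtPower (F : Type*) [Field F] (n : ℕ) (V : Type*) [AddCommGroup V] [Module F V] :
    Type _ := ↥(⋀[F]^n V)

noncomputable instance (F : Type*) [Field F] (n : ℕ) (V : Type*) [AddCommGroup V]
    [Module F V] : AddCommGroup (ExtPower F n V) :=
  inferInstanceAs (AddCommGroup ↥(⋀[F]^n V))

noncomputable instance (F : Type*) [Field F] (n : ℕ) (V : Type*) [AddCommGroup V]
    [Module F V] : Module F (ExtPower F n V) :=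
  inferInstanceAs (Module F ↥(⋀[F]^n V))

/-- The wedge product `v₀ ∧ ⋯ ∧ v_{n-1} ∈ ⋀^n V` of an `n`-tuple of vectors of `V`. -/
noncomputable def wedge (F : Type*) [Field F] {V : Type*} [AddCommGroup V] [Module F V]
    (n : ℕ) (v : Fin n → V) : ExtPower F n V :=
  ⟨ExteriorAlgebra.ιMulti F n v, ExteriorAlgebra.ιMulti_range F n (Set.mem_range_self v)⟩

section Aux

open ExteriorAlgebra

variable (F : Type*) [Field F] {V' V : Type*} [AddCommGroup V'] [Module F V']
  [AddCommGroup V] [Module F V]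

lemma myIotaMulti_snoc (n : ℕ) (u : Fin n → V) (x : V) :
    ιMulti F (n+1) (Fin.snoc u x) = ιMulti F n u * ι F x := by
  rw [ιMulti_apply, ιMulti_apply, List.ofFn_succ', List.concat_eq_append, List.prod_append]
  simp [Fin.snoc_castSucc, Fin.snoc_last]

lemma myIotaMulti_succAbove_mul (k : ℕ) (v : Fin (k+1) → V) (i : Fin (k+1)) :
    ιMulti F k (fun l => v (i.succAbove l)) * ι F (v i)
      = ((-1 : F) ^ (k - (i : ℕ))) • ιMulti F (k+1) v := by
  set τ : Equiv.Perm (Fin (k+1)) := (Fin.cycleRange i)⁻¹ * finRotate (k+1) with hτ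
  have hcomp : v ∘ τ = Fin.snoc (fun l => v (i.succAbove l)) (v i) := by
    funext l
    refine Fin.lastCases ?_ (fun l => ?_) l
    · have h1 : τ (Fin.last k) = i := by
        rw [hτ, Equiv.Perm.mul_apply, finRotate_last, ← Fin.cycleRange_self i,
          Equiv.Perm.inv_def, Equiv.symm_apply_apply]
      simp [h1]
    · have h1 : τ (Fin.castSucc l) = i.succAbove l := by
        rw [hτ, Equiv.Perm.mul_apply, finRotate_succ_apply, Fin.coeSucc_eq_succ,
          ← Fin.cycleRange_succAbove i l, Equiv.Perm.inv_def, Equiv.symm_apply_apply]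
      simp [h1]
  have hperm := AlternatingMap.map_perm (ιMulti F (k+1)) v τ
  rw [hcomp, myIotaMulti_snoc] at hperm
  rw [hperm]
  have hsign : Equiv.Perm.sign τ = (-1 : ℤˣ) ^ ((i : ℕ) + k) := by
    rw [hτ, map_mul, map_inv, Fin.sign_cycleRange, sign_finRotate, pow_add]
    congr 1
  rw [hsign, Units.smul_def]
  have h2 : (((-1 : ℤˣ) ^ ((i : ℕ) + k) : ℤˣ) : ℤ) = (-1 : ℤ) ^ ((i : ℕ) + k) := by
    push_cast; ring
  rw [h2, ← Int.cast_smul_eq_zsmul F]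
  congr 1
  push_cast
  have hik : (i : ℕ) ≤ k := Fin.is_le i
  rw [show (i : ℕ) + k = (k - (i : ℕ)) + 2 * (i : ℕ) by omega, pow_add, pow_mul,
    neg_one_sq, one_pow, mul_one]

lemma wedge_span (n : ℕ) :
    Submodule.span F (Set.range (wedge F (V := V) n)) = ⊤ := by
  apply Submodule.map_injective_of_injective (⋀[F]^n V).injective_subtype
  erw [Submodule.map_span, Submodule.map_top, Submodule.range_subtype, ← Set.range_comp]
  exact ιMulti_span_fixedDegree F n

lemma wedge_ext {n : ℕ} {W : Type*} [AddCommGroup W] [Module F W]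
    {f g : ExtPower F n V →ₗ[F] W}
    (h : ∀ v : Fin n → V, f (wedge F n v) = g (wedge F n v)) : f = g :=
  LinearMap.ext_on_range (wedge_span F n) h

/-- The map `⋀^n f` induced on `n`-th exterior powers. -/
noncomputable def extMap (f : V' →ₗ[F] V) (n : ℕ) :
    ExtPower F n V' →ₗ[F] ExtPower F n V :=
  (ExteriorAlgebra.map f).toLinearMap.restrict (p := ⋀[F]^n V') (q := ⋀[F]^n V)
    (by
      intro x hx
      rw [← ιMulti_span_fixedDegree F n] at hx
      induction hx using Submodule.span_induction with
      | mem y hy =>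
        obtain ⟨v, rfl⟩ := hy
        rw [AlgHom.toLinearMap_apply, map_apply_ιMulti]
        exact ιMulti_range F n (Set.mem_range_self _)
      | zero => simp
      | add y z _ _ hy hz => rw [map_add]; exact Submodule.add_mem _ hy hz
      | smul c y _ hy => rw [map_smul]; exact Submodule.smul_mem _ c hy)

lemma extMap_wedge (f : V' →ₗ[F] V) (n : ℕ) (v : Fin n → V') :
    extMap F f n (wedge F n v) = wedge F n (fun l => f (v l)) := by
  apply Subtype.ext
  show (ExteriorAlgebra.map f).toLinearMap (ιMulti F n v) = ιMulti F n (fun l => f (v l))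
  rw [AlgHom.toLinearMap_apply, map_apply_ιMulti]
  rfl

/-- Right multiplication `ω ⊗ x ↦ ω ∧ x` from `⋀^n V ⊗ V` to `⋀^{n+1} V`. -/
noncomputable def mulMap (n : ℕ) : (ExtPower F n V) ⊗[F] V →ₗ[F] ExtPower F (n+1) V :=
  TensorProduct.lift
    (LinearMap.mk₂ F
      (fun ω x => (⟨ω.1 * ι F x, by
        show _ ∈ LinearMap.range (ι F) ^ (n+1)
        rw [pow_succ]
        exact Submodule.mul_mem_mul ω.2 (LinearMap.mem_range_self _ x)⟩ : ExtPower F (n+1) V))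
      (fun ω₁ ω₂ x => by apply Subtype.ext; show (ω₁.1 + ω₂.1) * _ = _; rw [add_mul]; rfl)
      (fun c ω x => by apply Subtype.ext; show (c • ω.1) * _ = _; rw [smul_mul_assoc]; rfl)
      (fun ω x₁ x₂ => by apply Subtype.ext; show ω.1 * ι F (x₁ + x₂) = _;
                         rw [map_add, mul_add]; rfl)
      (fun c ω x => by apply Subtype.ext; show ω.1 * ι F (c • x) = _;
                       rw [map_smul, mul_smul_comm]; rfl))

lemma mulMap_tmul (n : ℕ) (ω : ExtPower F n V) (x : V) :
    (mulMap F n (ω ⊗ₜ[F] x)).1 = ω.1 * ι F x := rfl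

end Aux

/-- Let `j : V' → V` be an injective linear map, `δ'` and `δ` the Koszul
differentials of `V'` and `V`, and `j₂ = (⋀^k j) ⊗ j`, where `⋀^k j` is the map induced by
`j` on `k`-th exterior powers. Then the preimage under `j₂` of the range of `δ` equals the
range of `δ'`; in particular, if `α'` satisfies `j₂ α' = δ β` for some `β`, then there is a
`β'` with `δ' β' = α'`. -/
theorem koszul_preimage_range (F : Type*) [Field F] [CharZero F]
    (V' V : Type*) [AddCommGroup V'] [Module F V'] [AddCommGroup V] [Module F V]
    (j : V' →ₗ[F] V) (hj : Function.Injective j) (k : ℕ)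
    (δ' : (ExtPower F (k+1) V') →ₗ[F] (ExtPower F k V') ⊗[F] V')
    (hδ' : ∀ v : Fin (k+1) → V',
      δ' (wedge F (k+1) v) =
        ∑ i : Fin (k+1), ((-1 : F) ^ (k - (i : ℕ))) •
          (wedge F k (fun l => v (i.succAbove l)) ⊗ₜ[F] v i))
    (δ : (ExtPower F (k+1) V) →ₗ[F] (ExtPower F k V) ⊗[F] V)
    (hδ : ∀ v : Fin (k+1) → V,
      δ (wedge F (k+1) v) =
        ∑ i : Fin (k+1), ((-1 : F) ^ (k - (i : ℕ))) •
          (wedge F k (fun l => v (i.succAbove l)) ⊗ₜ[F] v i))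
    -- `jk` is the map `⋀^k j : ⋀^k V' → ⋀^k V` induced by `j`
    (jk : (ExtPower F k V') →ₗ[F] ExtPower F k V)
    (hjk : ∀ v : Fin k → V', jk (wedge F k v) = wedge F k (fun l => j (v l))) :
    Submodule.comap (TensorProduct.map jk j) (LinearMap.range δ) = LinearMap.range δ' ∧
    ∀ (α' : (ExtPower F k V') ⊗[F] V') (β : ExtPower F (k+1) V),
      TensorProduct.map jk j α' = δ β → ∃ β' : ExtPower F (k+1) V', δ' β' = α' := by
  classical
  set jk1 := extMap F j (k+1) with hjk1def
  -- jk agrees with the functorial map on the underlying algebra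
  have hjk' : ∀ ω : ExtPower F k V', (jk ω).1 = ExteriorAlgebra.map j ω.1 := by
    set sV : ExtPower F k V →ₗ[F] ExteriorAlgebra F V := (⋀[F]^k V).subtype with hsV
    set sV' : ExtPower F k V' →ₗ[F] ExteriorAlgebra F V' := (⋀[F]^k V').subtype with hsV'
    have heq : sV.comp jk = ((ExteriorAlgebra.map j).toLinearMap).comp sV' := by
      apply wedge_ext F
      intro v
      simp only [LinearMap.comp_apply]
      rw [hjk v]
      show (ExteriorAlgebra.ιMulti F k fun l => j (v l))
        = ExteriorAlgebra.map j (ExteriorAlgebra.ιMulti F k v)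
      rw [ExteriorAlgebra.map_apply_ιMulti]
      rfl
    intro ω
    exact DFunLike.congr_fun heq ω
  -- commutation δ ∘ jk1 = (jk ⊗ j) ∘ δ'
  have hcomm : δ.comp jk1 = (TensorProduct.map jk j).comp δ' := by
    apply wedge_ext F
    intro v
    simp only [LinearMap.comp_apply, hjk1def, extMap_wedge, hδ, hδ', map_sum,
      LinearMapClass.map_smul, TensorProduct.map_tmul, hjk]
  -- retraction: mulMap ∘ δ = (k+1) • id
  have hm : (mulMap F k (V := V)).comp δ = ((k : F) + 1) • LinearMap.id := by
    apply wedge_ext F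
    intro v
    simp only [LinearMap.comp_apply, hδ, map_sum, LinearMapClass.map_smul,
      LinearMap.smul_apply, LinearMap.id_apply]
    have hterm : ∀ i : Fin (k+1),
        (-1 : F) ^ (k - (i : ℕ)) • mulMap F k
          ((wedge F k fun l => v (i.succAbove l)) ⊗ₜ[F] v i) = wedge F (k+1) v := by
      intro i
      apply Subtype.ext
      show (-1 : F) ^ (k - (i : ℕ)) •
        (mulMap F k ((wedge F k fun l => v (i.succAbove l)) ⊗ₜ[F] v i)).1
        = ExteriorAlgebra.ιMulti F (k+1) v
      rw [mulMap_tmul]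
      show (-1 : F) ^ (k - (i : ℕ)) •
        (ExteriorAlgebra.ιMulti F k (fun l => v (i.succAbove l)) * ExteriorAlgebra.ι F (v i))
        = ExteriorAlgebra.ιMulti F (k+1) v
      rw [myIotaMulti_succAbove_mul, smul_smul, ← pow_add,
        show (k - (i : ℕ)) + (k - (i : ℕ)) = 2 * (k - (i : ℕ)) by ring, pow_mul,
        neg_one_sq, one_pow, one_smul]
    rw [Finset.sum_congr rfl (fun i _ => hterm i), Finset.sum_const, Finset.card_univ,
      Fintype.card_fin, ← Nat.cast_smul_eq_nsmul F]
    congr 1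
    push_cast
    ring
  -- commutation mulMap ∘ (jk ⊗ j) = jk1 ∘ mulMap
  have hcm : (mulMap F k (V := V)).comp (TensorProduct.map jk j)
      = jk1.comp (mulMap F k (V := V')) := by
    apply TensorProduct.ext'
    intro ω x
    apply Subtype.ext
    show (mulMap F k ((jk ω) ⊗ₜ[F] (j x))).1 = _
    rw [mulMap_tmul, hjk' ω]
    show _ = ((ExteriorAlgebra.map j).toLinearMap) ((mulMap F k (ω ⊗ₜ[F] x)).1)
    rw [mulMap_tmul, AlgHom.toLinearMap_apply, map_mul, ExteriorAlgebra.map_apply_ι]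
  -- injectivity of jk ⊗ j
  have hinj : Function.Injective (TensorProduct.map jk j) := by
    obtain ⟨p, hp⟩ := j.exists_leftInverse_of_injective (LinearMap.ker_eq_bot.2 hj)
    have hpk : (extMap F p k).comp jk = LinearMap.id := by
      apply wedge_ext F
      intro v
      rw [LinearMap.comp_apply, hjk, extMap_wedge, LinearMap.id_apply]
      congr 1
      funext l
      exact DFunLike.congr_fun hp (v l)
    have : (TensorProduct.map (extMap F p k) p).comp (TensorProduct.map jk j)
        = LinearMap.id := by
      rw [← TensorProduct.map_comp, hpk, hp, TensorProduct.map_id]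
    intro a b hab
    have h2 := congrArg (TensorProduct.map (extMap F p k) p) hab
    rwa [← LinearMap.comp_apply, ← LinearMap.comp_apply, this, LinearMap.id_apply,
      LinearMap.id_apply] at h2
  have hkne : ((k : F) + 1) ≠ 0 := by
    have : ((k + 1 : ℕ) : F) ≠ 0 := Nat.cast_ne_zero.2 (Nat.succ_ne_zero k)
    push_cast at this
    exact this
  -- the key implication
  have key : ∀ (α' : (ExtPower F k V') ⊗[F] V') (β : ExtPower F (k+1) V),
      TensorProduct.map jk j α' = δ β → ∃ β' : ExtPower F (k+1) V', δ' β' = α' := by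
    intro α' β hβ
    set β' : ExtPower F (k+1) V' := ((k : F) + 1)⁻¹ • mulMap F k α' with hβ'def
    have h1 : jk1 β' = β := by
      rw [hβ'def, map_smul, ← LinearMap.comp_apply, ← hcm, LinearMap.comp_apply, hβ,
        ← LinearMap.comp_apply, hm, LinearMap.smul_apply, LinearMap.id_apply,
        smul_smul, inv_mul_cancel₀ hkne, one_smul]
    have h2 : TensorProduct.map jk j (δ' β') = TensorProduct.map jk j α' := by
      rw [← LinearMap.comp_apply, ← hcomm, LinearMap.comp_apply, h1, hβ]
    exact ⟨β', hinj h2⟩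
  refine ⟨?_, key⟩
  ext α'
  simp only [Submodule.mem_comap, LinearMap.mem_range]
  constructor
  · rintro ⟨β, hβ⟩
    exact key α' β hβ.symm
  · rintro ⟨γ', rfl⟩
    exact ⟨jk1 γ', by rw [← LinearMap.comp_apply, hcomm, LinearMap.comp_apply]⟩
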